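/- Let A = ⊕_{n≥0} A_n be a graded connected bialgebra over a field such that the reduced coproduct Δ'₂: A₂ → A₁⊗A₁ is injective. Then for every α ∈ A₃, if the component Δ'_{1,2}(α) ∈ A₁⊗A₂ of the reduced coproduct vanishes, then the component Δ'_{2,1}(α) ∈ A₂⊗A₁ also vanishes; consequently ker(Δ'_{1,2}|_{A₃}) = ker(Δ'₃). -/

import Mathlib

open TensorProduct DirectSum

section Aux

variable {k : Type*} [Field k] {M N P Q S T : Type*}
  [AddCommGroup M] [Module k M] [AddCommGroup N] [Module k N]
  [AddCommGroup P] [Module k P] [AddCommGroup Q] [Module k Q]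
  [AddCommGroup S] [Module k S] [AddCommGroup T] [Module k T]

lemma aux_map_zero_left (g : N →ₗ[k] Q) :
    TensorProduct.map (0 : M →ₗ[k] P) g = 0 :=
  TensorProduct.ext' fun x y => by simp

lemma aux_map_zero_right (f : M →ₗ[k] P) :
    TensorProduct.map f (0 : N →ₗ[k] Q) = 0 :=
  TensorProduct.ext' fun x y => by simp

lemma aux_map_eq_on_range (p : Submodule k M) (q : Submodule k N)
    (t : M ⊗[k] N)
    (ht : t ∈ LinearMap.range (TensorProduct.map p.subtype q.subtype))
    (f f' : M →ₗ[k] P) (g g' : N →ₗ[k] Q)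
    (hf : ∀ x ∈ p, f x = f' x) (hg : ∀ y ∈ q, g y = g' y) :
    TensorProduct.map f g t = TensorProduct.map f' g' t := by
  obtain ⟨s, rfl⟩ := ht
  rw [← LinearMap.comp_apply, ← LinearMap.comp_apply, ← TensorProduct.map_comp,
    ← TensorProduct.map_comp]
  have h1 : f ∘ₗ p.subtype = f' ∘ₗ p.subtype := by
    ext x; exact hf x x.2
  have h2 : g ∘ₗ q.subtype = g' ∘ₗ q.subtype := by
    ext y; exact hg y y.2
  rw [h1, h2]

lemma aux_map_mem_range (f : M →ₗ[k] P) (g : N →ₗ[k] Q)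
    (p : Submodule k P) (q : Submodule k Q)
    (hf : ∀ x, f x ∈ p) (hg : ∀ y, g y ∈ q) (t : M ⊗[k] N) :
    TensorProduct.map f g t ∈
      LinearMap.range (TensorProduct.map p.subtype q.subtype) := by
  refine ⟨TensorProduct.map (f.codRestrict p hf) (g.codRestrict q hg) t, ?_⟩
  rw [← LinearMap.comp_apply, ← TensorProduct.map_comp,
    LinearMap.subtype_comp_codRestrict, LinearMap.subtype_comp_codRestrict]

lemma aux_map_assoc (f : M →ₗ[k] P) (g : N →ₗ[k] Q) (h : S →ₗ[k] T)
    (u : (M ⊗[k] N) ⊗[k] S) :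
    TensorProduct.map f (TensorProduct.map g h)
        (TensorProduct.assoc k M N S u)
      = TensorProduct.assoc k P Q T
          (TensorProduct.map (TensorProduct.map f g) h u) := by
  have : (TensorProduct.map f (TensorProduct.map g h)) ∘ₗ
        (TensorProduct.assoc k M N S).toLinearMap
      = (TensorProduct.assoc k P Q T).toLinearMap ∘ₗ
        TensorProduct.map (TensorProduct.map f g) h :=
    TensorProduct.ext_threefold fun x y z => by simp
  exact LinearMap.congr_fun this u

end Aux

set_option maxHeartbeats 1000000 in
/-- In a graded connected bialgebra over a field with Δ'₂ : A₂ → A₁⊗A₁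
injective, for α ∈ A₃ the vanishing of the (1,2)-component of the reduced
coproduct implies the vanishing of the (2,1)-component; consequently
ker(Δ'_{1,2}|_{A₃}) = ker(Δ'₃). -/
theorem ker_delta12_eq_ker_delta3 (k : Type*) [Field k]
    (A : Type*) [Ring A] [Bialgebra k A]
    (𝒜 : ℕ → Submodule k A) [DirectSum.Decomposition 𝒜]
    (proj : ℕ → (A →ₗ[k] A))
    (hproj : ∀ (i : ℕ) (x : A), proj i x = (DirectSum.decompose 𝒜 x i : A))
    (hΔ : ∀ n : ℕ, ∀ x ∈ 𝒜 n, Coalgebra.comul (R := k) x ∈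
      ⨆ p : ℕ × ℕ, ⨆ _ : p.1 + p.2 = n,
        LinearMap.range (TensorProduct.map (𝒜 p.1).subtype (𝒜 p.2).subtype))
    (hcounit : ∀ n : ℕ, n ≠ 0 → ∀ x ∈ 𝒜 n, Coalgebra.counit (R := k) x = 0)
    (hconn : 𝒜 0 = Submodule.span k {(1 : A)})
    (hinj : ∀ x ∈ 𝒜 2,
      Coalgebra.comul (R := k) x - x ⊗ₜ[k] (1 : A) - (1 : A) ⊗ₜ[k] x = 0 → x = 0) :
    ∀ α ∈ 𝒜 3,
      (TensorProduct.map (proj 1) (proj 2)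
          (Coalgebra.comul (R := k) α - α ⊗ₜ[k] (1 : A) - (1 : A) ⊗ₜ[k] α) = 0 →
        TensorProduct.map (proj 2) (proj 1)
          (Coalgebra.comul (R := k) α - α ⊗ₜ[k] (1 : A) - (1 : A) ⊗ₜ[k] α) = 0) ∧
      (TensorProduct.map (proj 1) (proj 2)
          (Coalgebra.comul (R := k) α - α ⊗ₜ[k] (1 : A) - (1 : A) ⊗ₜ[k] α) = 0 ↔
        Coalgebra.comul (R := k) α - α ⊗ₜ[k] (1 : A) - (1 : A) ⊗ₜ[k] α = 0) := by
  -- basic projection facts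
  have hPmem : ∀ (i : ℕ) (x : A), proj i x ∈ 𝒜 i := by
    intro i x; rw [hproj]; exact (DirectSum.decompose 𝒜 x i).2
  have hPsame : ∀ (i : ℕ), ∀ x ∈ 𝒜 i, proj i x = x := by
    intro i x hx; rw [hproj]; exact DirectSum.decompose_of_mem_same 𝒜 hx
  have hPne : ∀ (i j : ℕ), j ≠ i → ∀ x ∈ 𝒜 j, proj i x = 0 := by
    intro i j hij x hx; rw [hproj]; exact DirectSum.decompose_of_mem_ne 𝒜 hx hij
  -- orthogonality of the projections on graded components
  have horthl : ∀ (p q a b : ℕ) (t : A ⊗[k] A),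
      t ∈ LinearMap.range (TensorProduct.map (𝒜 p).subtype (𝒜 q).subtype) →
      a ≠ p → TensorProduct.map (proj a) (proj b) t = 0 := by
    intro p q a b t ht hab
    rw [aux_map_eq_on_range (𝒜 p) (𝒜 q) t ht (proj a) 0 (proj b) (proj b)
      (fun x hx => by rw [hPne a p (Ne.symm hab) x hx]; rfl) (fun y _ => rfl),
      aux_map_zero_left]
    rfl
  have horthr : ∀ (p q a b : ℕ) (t : A ⊗[k] A),
      t ∈ LinearMap.range (TensorProduct.map (𝒜 p).subtype (𝒜 q).subtype) →
      b ≠ q → TensorProduct.map (proj a) (proj b) t = 0 := by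
    intro p q a b t ht hab
    rw [aux_map_eq_on_range (𝒜 p) (𝒜 q) t ht (proj a) (proj a) (proj b) 0
      (fun x _ => rfl) (fun y hy => by rw [hPne b q (Ne.symm hab) y hy]; rfl),
      aux_map_zero_right]
    rfl
  have hid : ∀ (p q : ℕ) (t : A ⊗[k] A),
      t ∈ LinearMap.range (TensorProduct.map (𝒜 p).subtype (𝒜 q).subtype) →
      TensorProduct.map (proj p) (proj q) t = t := by
    intro p q t ht
    rw [aux_map_eq_on_range (𝒜 p) (𝒜 q) t ht (proj p) LinearMap.id (proj q) LinearMap.id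
      (fun x hx => by rw [hPsame p x hx]; rfl) (fun y hy => by rw [hPsame q y hy]; rfl),
      TensorProduct.map_id, LinearMap.id_apply]
  -- decomposition of elements of the degree-n part of A ⊗ A
  have hsum : ∀ (n : ℕ) (t : A ⊗[k] A),
      t ∈ (⨆ p : ℕ × ℕ, ⨆ _ : p.1 + p.2 = n,
        LinearMap.range (TensorProduct.map (𝒜 p.1).subtype (𝒜 p.2).subtype)) →
      t = ∑ i ∈ Finset.range (n + 1),
        TensorProduct.map (proj i) (proj (n - i)) t := by
    intro n t ht
    refine Submodule.iSup_induction
      (motive := fun u => u = ∑ i ∈ Finset.range (n + 1),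
        TensorProduct.map (proj i) (proj (n - i)) u) _ ht
      (fun p x hx => ?_) (by simp) ?_
    · by_cases hp : p.1 + p.2 = n
      · rw [iSup_pos hp] at hx
        rw [Finset.sum_eq_single_of_mem p.1
          (Finset.mem_range.2 (by omega))
          (fun i _ hi => horthl p.1 p.2 i (n - i) x hx hi)]
        have h2 : n - p.1 = p.2 := by omega
        rw [h2]
        exact (hid p.1 p.2 x hx).symm
      · rw [iSup_neg hp] at hx
        simp only [Submodule.mem_bot] at hx
        subst hx; simp
    · intro x y hx hy
      simp only [map_add, Finset.sum_add_distrib, ← hx, ← hy]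
  -- elements of the (0, n) range have the form 1 ⊗ z
  have hform0 : ∀ (n : ℕ) (u : A ⊗[k] A),
      u ∈ LinearMap.range (TensorProduct.map (𝒜 0).subtype (𝒜 n).subtype) →
      ∃ z ∈ 𝒜 n, u = (1 : A) ⊗ₜ[k] z := by
    rintro n u ⟨s, rfl⟩
    induction s using TensorProduct.induction_on with
    | zero => exact ⟨0, zero_mem _, by simp⟩
    | tmul x y =>
      have hx1 : (x : A) ∈ Submodule.span k {(1 : A)} := by rw [← hconn]; exact x.2
      obtain ⟨c, hc⟩ := Submodule.mem_span_singleton.1 hx1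
      refine ⟨c • (y : A), Submodule.smul_mem _ _ y.2, ?_⟩
      simp only [TensorProduct.map_tmul, Submodule.coe_subtype]
      rw [← hc, TensorProduct.smul_tmul]
    | add s₁ s₂ h₁ h₂ =>
      obtain ⟨z₁, hz₁, e₁⟩ := h₁
      obtain ⟨z₂, hz₂, e₂⟩ := h₂
      exact ⟨z₁ + z₂, add_mem hz₁ hz₂, by rw [map_add, e₁, e₂, TensorProduct.tmul_add]⟩
  have hformn : ∀ (n : ℕ) (u : A ⊗[k] A),
      u ∈ LinearMap.range (TensorProduct.map (𝒜 n).subtype (𝒜 0).subtype) →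
      ∃ z ∈ 𝒜 n, u = z ⊗ₜ[k] (1 : A) := by
    rintro n u ⟨s, rfl⟩
    induction s using TensorProduct.induction_on with
    | zero => exact ⟨0, zero_mem _, by simp⟩
    | tmul x y =>
      have hy1 : (y : A) ∈ Submodule.span k {(1 : A)} := by rw [← hconn]; exact y.2
      obtain ⟨c, hc⟩ := Submodule.mem_span_singleton.1 hy1
      refine ⟨c • (x : A), Submodule.smul_mem _ _ x.2, ?_⟩
      simp only [TensorProduct.map_tmul, Submodule.coe_subtype]
      rw [← hc, TensorProduct.tmul_smul, TensorProduct.smul_tmul']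
    | add s₁ s₂ h₁ h₂ =>
      obtain ⟨z₁, hz₁, e₁⟩ := h₁
      obtain ⟨z₂, hz₂, e₂⟩ := h₂
      exact ⟨z₁ + z₂, add_mem hz₁ hz₂, by rw [map_add, e₁, e₂, TensorProduct.add_tmul]⟩
  -- projections of any tensor land in the corresponding range
  have hπmem : ∀ (a b : ℕ) (u : A ⊗[k] A),
      TensorProduct.map (proj a) (proj b) u ∈
        LinearMap.range (TensorProduct.map (𝒜 a).subtype (𝒜 b).subtype) :=
    fun a b u => aux_map_mem_range _ _ _ _ (hPmem a) (hPmem b) u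
  -- the extreme components of the coproduct of a homogeneous element
  have hedge : ∀ n : ℕ, n ≠ 0 → ∀ x ∈ 𝒜 n,
      TensorProduct.map (proj 0) (proj n) (Coalgebra.comul (R := k) x)
          = (1 : A) ⊗ₜ[k] x ∧
      TensorProduct.map (proj n) (proj 0) (Coalgebra.comul (R := k) x)
          = x ⊗ₜ[k] (1 : A) := by
    intro n hn x hx
    have hdec := hsum n _ (hΔ n x hx)
    constructor
    · obtain ⟨z, hz, hz1⟩ := hform0 n _ (hπmem 0 n (Coalgebra.comul (R := k) x))
      have h1 : LinearMap.rTensor A (Coalgebra.counit (R := k) (A := A))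
          (Coalgebra.comul (R := k) x) = (1 : k) ⊗ₜ[k] z := by
        conv_lhs => rw [hdec]
        rw [map_sum, Finset.sum_eq_single_of_mem 0
          (Finset.mem_range.2 (Nat.succ_pos n)) ?_]
        · have e0 : n - 0 = n := Nat.sub_zero n
          rw [e0, hz1]
          have e1 : LinearMap.rTensor A (Coalgebra.counit (R := k) (A := A))
              ((1 : A) ⊗ₜ[k] z)
              = (Coalgebra.counit (R := k) (1 : A)) ⊗ₜ[k] z := rfl
          rw [e1, Bialgebra.counit_one]
        · intro i _ hi
          have e2 : LinearMap.rTensor A (Coalgebra.counit (R := k) (A := A))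
              = TensorProduct.map Coalgebra.counit LinearMap.id := rfl
          rw [e2, aux_map_eq_on_range (𝒜 i) (𝒜 (n - i)) _ (hπmem i (n - i) _)
            Coalgebra.counit 0 LinearMap.id LinearMap.id
            (fun y hy => by rw [hcounit i hi y hy]; rfl) (fun y _ => rfl),
            aux_map_zero_left]
          rfl
      have h2 := Coalgebra.rTensor_counit_comul (R := k) x
      have h3 : z = x := by
        have h4 := h1.symm.trans h2
        have h5 := congrArg (TensorProduct.lid k A) h4
        simpa using h5
      rw [hz1, h3]
    · obtain ⟨z, hz, hz1⟩ := hformn n _ (hπmem n 0 (Coalgebra.comul (R := k) x))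
      have h1 : LinearMap.lTensor A (Coalgebra.counit (R := k) (A := A))
          (Coalgebra.comul (R := k) x) = z ⊗ₜ[k] (1 : k) := by
        conv_lhs => rw [hdec]
        rw [map_sum, Finset.sum_eq_single_of_mem n
          (Finset.mem_range.2 (Nat.lt_succ_self n)) ?_]
        · have e0 : n - n = 0 := Nat.sub_self n
          rw [e0, hz1]
          have e1 : LinearMap.lTensor A (Coalgebra.counit (R := k) (A := A))
              (z ⊗ₜ[k] (1 : A))
              = z ⊗ₜ[k] (Coalgebra.counit (R := k) (1 : A)) := rfl
          rw [e1, Bialgebra.counit_one]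
        · intro i hi' hi
          have hni : n - i ≠ 0 := by
            have := Finset.mem_range.1 hi'
            omega
          have e2 : LinearMap.lTensor A (Coalgebra.counit (R := k) (A := A))
              = TensorProduct.map LinearMap.id Coalgebra.counit := rfl
          rw [e2, aux_map_eq_on_range (𝒜 i) (𝒜 (n - i)) _ (hπmem i (n - i) _)
            LinearMap.id LinearMap.id Coalgebra.counit 0
            (fun y _ => rfl) (fun y hy => by rw [hcounit (n - i) hni y hy]; rfl),
            aux_map_zero_right]
          rfl
      have h2 := Coalgebra.lTensor_counit_comul (R := k) x
      have h3 : z = x := by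
        have h4 := h1.symm.trans h2
        have h5 := congrArg (TensorProduct.rid k A) h4
        simpa using h5
      rw [hz1, h3]
  -- the middle component of the coproduct of a degree-2 element
  have hD2 : ∀ x ∈ 𝒜 2, TensorProduct.map (proj 1) (proj 1) (Coalgebra.comul (R := k) x)
      = Coalgebra.comul (R := k) x - x ⊗ₜ[k] (1 : A) - (1 : A) ⊗ₜ[k] x := by
    intro x hx
    have hdec := hsum 2 _ (hΔ 2 x hx)
    rw [Finset.sum_range_succ, Finset.sum_range_succ, Finset.sum_range_one] at hdec
    norm_num at hdec
    rw [(hedge 2 (by norm_num) x hx).1, (hedge 2 (by norm_num) x hx).2] at hdec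
    conv_rhs => rw [hdec]
    abel
  -- main argument
  intro α hα
  have key : TensorProduct.map (proj 1) (proj 2)
        (Coalgebra.comul (R := k) α - α ⊗ₜ[k] (1 : A) - (1 : A) ⊗ₜ[k] α) = 0 →
      Coalgebra.comul (R := k) α - α ⊗ₜ[k] (1 : A) - (1 : A) ⊗ₜ[k] α = 0 := by
    intro h12
    have hdec := hsum 3 _ (hΔ 3 α hα)
    rw [Finset.sum_range_succ, Finset.sum_range_succ, Finset.sum_range_succ,
      Finset.sum_range_one] at hdec
    norm_num at hdec
    rw [(hedge 3 (by norm_num) α hα).1, (hedge 3 (by norm_num) α hα).2] at hdec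
    have hred : Coalgebra.comul (R := k) α - α ⊗ₜ[k] (1 : A) - (1 : A) ⊗ₜ[k] α
        = TensorProduct.map (proj 1) (proj 2) (Coalgebra.comul (R := k) α)
          + TensorProduct.map (proj 2) (proj 1) (Coalgebra.comul (R := k) α) := by
      conv_lhs => rw [hdec]
      abel
    have ht1 : TensorProduct.map (proj 1) (proj 2) (Coalgebra.comul (R := k) α) = 0 := by
      rw [hred, map_add, hid 1 2 _ (hπmem 1 2 _),
        horthl 2 1 1 2 _ (hπmem 2 1 _) (by norm_num)] at h12
      simpa using h12
    rw [hred, ht1, zero_add]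
    -- kill the (2,1) component using coassociativity and injectivity of Δ'₂
    set Dl : A →ₗ[k] A ⊗[k] A :=
      Coalgebra.comul - ((TensorProduct.mk k A A).flip 1) - (TensorProduct.mk k A A 1)
      with hDldef
    have hDl : ∀ y : A, Dl y = Coalgebra.comul (R := k) y - y ⊗ₜ[k] (1 : A) - (1 : A) ⊗ₜ[k] y := by
      intro y
      simp [hDldef, TensorProduct.mk_apply]
    have hco := Coalgebra.coassoc_apply (R := k) α
    have happ := congrArg
      (TensorProduct.map (proj 1) (TensorProduct.map (proj 1) (proj 1))) hco
    -- right-hand side vanishes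
    have hrhs : TensorProduct.map (proj 1) (TensorProduct.map (proj 1) (proj 1))
        (LinearMap.lTensor A (Coalgebra.comul (R := k) (A := A))
          (Coalgebra.comul (R := k) α)) = 0 := by
      have e1 : LinearMap.lTensor A (Coalgebra.comul (R := k) (A := A))
          = TensorProduct.map LinearMap.id Coalgebra.comul := rfl
      rw [e1, ← LinearMap.comp_apply, ← TensorProduct.map_comp]
      have hz : ∀ p q : ℕ, p ≠ 1 → ∀ t : A ⊗[k] A,
          t ∈ LinearMap.range (TensorProduct.map (𝒜 p).subtype (𝒜 q).subtype) →
          TensorProduct.map (proj 1 ∘ₗ LinearMap.id)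
            ((TensorProduct.map (proj 1) (proj 1)) ∘ₗ Coalgebra.comul) t = 0 := by
        intro p q hp t ht
        rw [aux_map_eq_on_range (𝒜 p) (𝒜 q) t ht _ 0 _
            ((TensorProduct.map (proj 1) (proj 1)) ∘ₗ Coalgebra.comul)
            (fun y hy => by
              simp only [LinearMap.comp_apply, LinearMap.id_apply]
              rw [hPne 1 p hp y hy]; rfl)
            (fun y _ => rfl), aux_map_zero_left]
        rfl
      conv_lhs => rw [hdec]
      rw [map_add, map_add, map_add, ht1, map_zero,
        hz 0 3 (by norm_num) ((1 : A) ⊗ₜ[k] α)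
          ⟨(⟨1, hconn ▸ Submodule.mem_span_singleton_self 1⟩ : 𝒜 0) ⊗ₜ
            (⟨α, hα⟩ : 𝒜 3), by simp⟩,
        hz 2 1 (by norm_num) _ (hπmem 2 1 _),
        hz 3 0 (by norm_num) (α ⊗ₜ[k] (1 : A))
          ⟨(⟨α, hα⟩ : 𝒜 3) ⊗ₜ
            (⟨1, hconn ▸ Submodule.mem_span_singleton_self 1⟩ : 𝒜 0), by simp⟩]
      simp
    -- left-hand side
    have hlhs : TensorProduct.map (proj 1) (TensorProduct.map (proj 1) (proj 1))
        (TensorProduct.assoc k A A A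
          (LinearMap.rTensor A (Coalgebra.comul (R := k) (A := A))
            (Coalgebra.comul (R := k) α)))
        = TensorProduct.assoc k A A A
            (LinearMap.rTensor A Dl
              (TensorProduct.map (proj 2) (proj 1) (Coalgebra.comul (R := k) α))) := by
      rw [aux_map_assoc]
      congr 1
      have e1 : LinearMap.rTensor A (Coalgebra.comul (R := k) (A := A))
          = TensorProduct.map Coalgebra.comul LinearMap.id := rfl
      rw [e1, ← LinearMap.comp_apply, ← TensorProduct.map_comp]
      have hz : ∀ p q : ℕ, q ≠ 1 → ∀ t : A ⊗[k] A,
          t ∈ LinearMap.range (TensorProduct.map (𝒜 p).subtype (𝒜 q).subtype) →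
          TensorProduct.map ((TensorProduct.map (proj 1) (proj 1)) ∘ₗ Coalgebra.comul)
            (proj 1 ∘ₗ LinearMap.id) t = 0 := by
        intro p q hq t ht
        rw [aux_map_eq_on_range (𝒜 p) (𝒜 q) t ht
            ((TensorProduct.map (proj 1) (proj 1)) ∘ₗ Coalgebra.comul)
            ((TensorProduct.map (proj 1) (proj 1)) ∘ₗ Coalgebra.comul) _ 0
            (fun y _ => rfl)
            (fun y hy => by
              simp only [LinearMap.comp_apply, LinearMap.id_apply]
              rw [hPne 1 q hq y hy]; rfl), aux_map_zero_right]
        rfl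
      conv_lhs => rw [hdec]
      rw [map_add, map_add, map_add, ht1, map_zero,
        hz 0 3 (by norm_num) ((1 : A) ⊗ₜ[k] α)
          ⟨(⟨1, hconn ▸ Submodule.mem_span_singleton_self 1⟩ : 𝒜 0) ⊗ₜ
            (⟨α, hα⟩ : 𝒜 3), by simp⟩,
        hz 3 0 (by norm_num) (α ⊗ₜ[k] (1 : A))
          ⟨(⟨α, hα⟩ : 𝒜 3) ⊗ₜ
            (⟨1, hconn ▸ Submodule.mem_span_singleton_self 1⟩ : 𝒜 0), by simp⟩]
      simp only [zero_add, add_zero]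
      have e2 : LinearMap.rTensor A Dl = TensorProduct.map Dl LinearMap.id := rfl
      rw [e2]
      exact aux_map_eq_on_range (𝒜 2) (𝒜 1) _ (hπmem 2 1 _) _ Dl _ LinearMap.id
        (fun y hy => by
          simp only [LinearMap.comp_apply]
          rw [hD2 y hy, hDl y])
        (fun y hy => by
          simp only [LinearMap.comp_apply, LinearMap.id_apply]
          exact hPsame 1 y hy)
    have hzero : LinearMap.rTensor A Dl
        (TensorProduct.map (proj 2) (proj 1) (Coalgebra.comul (R := k) α)) = 0 := by
      have := happ
      rw [hlhs, hrhs] at this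
      exact (LinearEquiv.map_eq_zero_iff _).1 this
    obtain ⟨s, hs⟩ := hπmem 2 1 (Coalgebra.comul (R := k) α)
    have hmap : TensorProduct.map (Dl ∘ₗ (𝒜 2).subtype) (𝒜 1).subtype s = 0 := by
      have e2 : LinearMap.rTensor A Dl = TensorProduct.map Dl LinearMap.id := rfl
      have e3 : LinearMap.id ∘ₗ (𝒜 1).subtype = (𝒜 1).subtype :=
        LinearMap.id_comp _
      rw [← hs, e2, ← LinearMap.comp_apply, ← TensorProduct.map_comp, e3] at hzero
      exact hzero
    have hinjD : Function.Injective (Dl ∘ₗ (𝒜 2).subtype) := by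
      refine (injective_iff_map_eq_zero _).2 fun x hx0 => ?_
      refine Subtype.ext (hinj (x : A) x.2 ?_)
      rw [← hDl]
      simpa using hx0
    have hmapinj : Function.Injective
        (TensorProduct.map (Dl ∘ₗ (𝒜 2).subtype) (𝒜 1).subtype) := by
      rw [← LinearMap.lTensor_comp_rTensor]
      exact (Module.Flat.lTensor_preserves_injective_linearMap _
          (Submodule.injective_subtype _)).comp
        (Module.Flat.rTensor_preserves_injective_linearMap _ hinjD)
    have hs0 : s = 0 := hmapinj (by rw [hmap, map_zero])
    rw [← hs, hs0, map_zero]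
  exact ⟨fun h => by rw [key h]; exact map_zero _, ⟨key, fun h => by rw [h]; exact map_zero _⟩⟩
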